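/- If S is a semigroup such that H_L(S) = 2 or H_R(S) = 2, then H_J(S) ∈ {2, 3}. -/

import Mathlib

namespace GreenHeights

universe u

section Defs

variable {S : Type u} [Semigroup S]

/-- Green's preorder `≤_L`: `a ≤_L b` iff `a = s * b` for some `s ∈ S¹`
(i.e. `a = b` or `a = s * b` for some `s ∈ S`). -/
def leL (a b : S) : Prop := a = b ∨ ∃ s : S, a = s * b

/-- Green's preorder `≤_R`: `a ≤_R b` iff `a = b * s` for some `s ∈ S¹`. -/
def leR (a b : S) : Prop := a = b ∨ ∃ s : S, a = b * s

/-- Green's preorder `≤_J`: `a ≤_J b` iff `a = s * b * t` for some `s, t ∈ S¹`. -/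
def leJ (a b : S) : Prop :=
  a = b ∨ (∃ s : S, a = s * b) ∨ (∃ t : S, a = b * t) ∨ ∃ s t : S, a = s * b * t

/-- Green's preorder `≤_H`. -/
def leH (a b : S) : Prop := leL a b ∧ leR a b

/-- Green's relation `L`. -/
def eqvL (a b : S) : Prop := leL a b ∧ leL b a

/-- Green's relation `R`. -/
def eqvR (a b : S) : Prop := leR a b ∧ leR b a

/-- Green's relation `J`. -/
def eqvJ (a b : S) : Prop := leJ a b ∧ leJ b a

/-- Green's relation `H`. -/
def eqvH (a b : S) : Prop := leH a b ∧ leH b a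

/-- `a <_L b`. -/
def ltL (a b : S) : Prop := leL a b ∧ ¬ leL b a

/-- `a <_R b`. -/
def ltR (a b : S) : Prop := leR a b ∧ ¬ leR b a

/-- `a <_J b`. -/
def ltJ (a b : S) : Prop := leJ a b ∧ ¬ leJ b a

/-- `a <_H b`. -/
def ltH (a b : S) : Prop := leH a b ∧ ¬ leH b a

end Defs

/-- The set of lengths of strictly decreasing chains with respect to a relation `lt`:
`m` is a chain length if there is a sequence `c 0 >' c 1 >' … >' c (m-1)`. -/
def chainLengths {T : Type u} (lt : T → T → Prop) : Set ℕ :=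
  {m | ∃ c : Fin m → T, ∀ i j : Fin m, i < j → lt (c j) (c i)}

/-- The height: the supremum, in `ℕ∞`, of the lengths of strictly decreasing chains. -/
noncomputable def heightOf {T : Type u} (lt : T → T → Prop) : ℕ∞ :=
  ⨆ m ∈ chainLengths lt, (m : ℕ∞)

/-- The `L`-height of a semigroup. -/
noncomputable def HL (S : Type u) [Semigroup S] : ℕ∞ := heightOf (ltL (S := S))

/-- The `R`-height of a semigroup. -/
noncomputable def HR (S : Type u) [Semigroup S] : ℕ∞ := heightOf (ltR (S := S))

/-- The `J`-height of a semigroup. -/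
noncomputable def HJ (S : Type u) [Semigroup S] : ℕ∞ := heightOf (ltJ (S := S))

/-- The `H`-height of a semigroup. -/
noncomputable def HH (S : Type u) [Semigroup S] : ℕ∞ := heightOf (ltH (S := S))

/-- `S` is left stable if `a ≤_L b` and `a J b` imply `a L b`. -/
def LeftStable (S : Type u) [Semigroup S] : Prop :=
  ∀ a b : S, leL a b → eqvJ a b → eqvL a b

/-- `S` is right stable if `a ≤_R b` and `a J b` imply `a R b`. -/
def RightStable (S : Type u) [Semigroup S] : Prop :=
  ∀ a b : S, leR a b → eqvJ a b → eqvR a b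

/-- `S` is stable if it is both left and right stable. -/
def Stable (S : Type u) [Semigroup S] : Prop := LeftStable S ∧ RightStable S

section Aux

variable {S : Type u} [Semigroup S]

private lemma leL_refl (a : S) : leL a a := Or.inl rfl

private lemma leL_trans {a b c : S} (h1 : leL a b) (h2 : leL b c) : leL a c := by
  rcases h1 with rfl | ⟨s, rfl⟩ <;> rcases h2 with rfl | ⟨u, rfl⟩
  · exact Or.inl rfl
  · exact Or.inr ⟨u, rfl⟩
  · exact Or.inr ⟨s, rfl⟩
  · exact Or.inr ⟨s * u, (mul_assoc s u c).symm⟩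

private lemma eqvL_refl (a : S) : eqvL a a := ⟨leL_refl a, leL_refl a⟩

private lemma eqvL_symm {a b : S} (h : eqvL a b) : eqvL b a := ⟨h.2, h.1⟩

private lemma eqvL_trans {a b c : S} (h1 : eqvL a b) (h2 : eqvL b c) : eqvL a c :=
  ⟨leL_trans h1.1 h2.1, leL_trans h2.2 h1.2⟩

private lemma leJ_refl (a : S) : leJ a a := Or.inl rfl

private lemma leL_leJ {a b : S} (h : leL a b) : leJ a b := by
  rcases h with rfl | ⟨s, rfl⟩
  · exact Or.inl rfl
  · exact Or.inr (Or.inl ⟨s, rfl⟩)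

private lemma leJ_trans {a b c : S} (h1 : leJ a b) (h2 : leJ b c) : leJ a c := by
  rcases h1 with rfl | ⟨s, rfl⟩ | ⟨t, rfl⟩ | ⟨s, t, rfl⟩ <;>
    rcases h2 with rfl | ⟨u, rfl⟩ | ⟨v, rfl⟩ | ⟨u, v, rfl⟩
  · exact leJ_refl _
  · exact Or.inr (Or.inl ⟨u, rfl⟩)
  · exact Or.inr (Or.inr (Or.inl ⟨v, rfl⟩))
  · exact Or.inr (Or.inr (Or.inr ⟨u, v, rfl⟩))
  · exact Or.inr (Or.inl ⟨s, rfl⟩)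
  · exact Or.inr (Or.inl ⟨s * u, (mul_assoc s u c).symm⟩)
  · exact Or.inr (Or.inr (Or.inr ⟨s, v, (mul_assoc s c v).symm⟩))
  · exact Or.inr (Or.inr (Or.inr ⟨s * u, v, by simp [mul_assoc]⟩))
  · exact Or.inr (Or.inr (Or.inl ⟨t, rfl⟩))
  · exact Or.inr (Or.inr (Or.inr ⟨u, t, rfl⟩))
  · exact Or.inr (Or.inr (Or.inl ⟨v * t, mul_assoc c v t⟩))
  · exact Or.inr (Or.inr (Or.inr ⟨u, v * t, mul_assoc (u * c) v t⟩))
  · exact Or.inr (Or.inr (Or.inr ⟨s, t, rfl⟩))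
  · exact Or.inr (Or.inr (Or.inr ⟨s * u, t, by simp [mul_assoc]⟩))
  · exact Or.inr (Or.inr (Or.inr ⟨s, v * t, by simp [mul_assoc]⟩))
  · exact Or.inr (Or.inr (Or.inr ⟨s * u, v * t, by simp [mul_assoc]⟩))

/-- `L`-minimal elements. -/
private def isMinL (m : S) : Prop := ∀ w, leL w m → leL m w

private lemma min_of_eqvL {m n : S} (hm : isMinL m) (h : eqvL n m) : isMinL n :=
  fun w hw => leL_trans h.1 (hm w (leL_trans hw h.1))

private lemma eqvL_mul_left_min (s : S) {m : S} (hm : isMinL m) : eqvL (s * m) m :=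
  ⟨Or.inr ⟨s, rfl⟩, hm _ (Or.inr ⟨s, rfl⟩)⟩

private lemma isMinL_mul_left (s : S) {m : S} (hm : isMinL m) : isMinL (s * m) :=
  min_of_eqvL hm (eqvL_mul_left_min s hm)

private lemma isMinL_mul_right (t : S) {m : S} (hm : isMinL m) : isMinL (m * t) := by
  intro w hw
  rcases hw with rfl | ⟨u, rfl⟩
  · exact leL_refl _
  · rcases hm (u * m) (Or.inr ⟨u, rfl⟩) with he | ⟨v, hv⟩
    · refine Or.inl ?_
      conv_lhs => rw [he]
      exact mul_assoc u m t
    · refine Or.inr ⟨v, ?_⟩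
      conv_lhs => rw [hv]
      simp [mul_assoc]

private lemma min_leJ_min {m m' : S} (_hm : isMinL m) (hm' : isMinL m') : leJ m' m := by
  have h1 : leL (m * m') m' := Or.inr ⟨m, rfl⟩
  rcases hm' _ h1 with he | ⟨u, hu⟩
  · exact Or.inr (Or.inr (Or.inl ⟨m', he⟩))
  · exact Or.inr (Or.inr (Or.inr ⟨u, m', hu.trans (mul_assoc u m m').symm⟩))

private lemma min_of_leJ {x m : S} (h : leJ x m) (hm : isMinL m) : isMinL x := by
  rcases h with rfl | ⟨s, rfl⟩ | ⟨t, rfl⟩ | ⟨s, t, rfl⟩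
  · exact hm
  · exact isMinL_mul_left s hm
  · exact isMinL_mul_right t hm
  · exact isMinL_mul_right t (isMinL_mul_left s hm)

private lemma isMinL_of_ltL (hH : ∀ x y z : S, ltL x y → ltL y z → False)
    {w v : S} (hwv : ltL w v) : isMinL w := by
  intro u hu
  by_contra hc
  exact hH u w v ⟨hu, hc⟩ hwv

private lemma descend (hH : ∀ x y z : S, ltL x y → ltL y z → False)
    {u v : S} (hlt : ltJ u v) (hnm : ¬ isMinL u) :
    ∃ t : S, eqvL u (v * t) ∧ eqvL (v * t) t := by
  obtain ⟨hle, hnge⟩ := hlt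
  rcases hle with rfl | ⟨s, rfl⟩ | ⟨t, rfl⟩ | ⟨s, t, rfl⟩
  · exact absurd (leJ_refl _) hnge
  · have h1 : leL (s * v) v := Or.inr ⟨s, rfl⟩
    have h2 : ¬ leL v (s * v) := fun hc => hnge (leL_leJ hc)
    exact absurd (isMinL_of_ltL hH ⟨h1, h2⟩) hnm
  · refine ⟨t, eqvL_refl _, Or.inr ⟨v, rfl⟩, ?_⟩
    by_contra hc
    exact hnm (isMinL_of_ltL hH ⟨Or.inr ⟨v, rfl⟩, hc⟩)
  · have hle1 : leL (s * v * t) (v * t) := Or.inr ⟨s, mul_assoc s v t⟩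
    have hge1 : leL (v * t) (s * v * t) := by
      by_contra hc
      exact hnm (isMinL_of_ltL hH ⟨hle1, hc⟩)
    have hnmvt : ¬ isMinL (v * t) := fun hmin => hnm (min_of_eqvL hmin ⟨hle1, hge1⟩)
    refine ⟨t, ⟨hle1, hge1⟩, Or.inr ⟨v, rfl⟩, ?_⟩
    by_contra hc
    exact hnmvt (isMinL_of_ltL hH ⟨Or.inr ⟨v, rfl⟩, hc⟩)

private lemma hat (hH : ∀ x y z : S, ltL x y → ltL y z → False)
    {v t : S} (h : eqvL (v * t) t) (hnt : ¬ isMinL t) :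
    ∃ v', v' * t = t ∧ eqvL v' v := by
  rcases h.2 with he | ⟨k, hk⟩
  · exact ⟨v, he.symm, eqvL_refl v⟩
  · have heq : (k * v) * t = t := (mul_assoc k v t).trans hk.symm
    refine ⟨k * v, heq, Or.inr ⟨k, rfl⟩, ?_⟩
    by_contra hc
    have hmin : isMinL (k * v) := isMinL_of_ltL hH ⟨Or.inr ⟨k, rfl⟩, hc⟩
    have h2 : isMinL ((k * v) * t) := isMinL_mul_right t hmin
    rw [heq] at h2
    exact hnt h2

private lemma no_four_chain (hH : ∀ x y z : S, ltL x y → ltL y z → False)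
    {a b c d : S} (h1 : ltJ b a) (h2 : ltJ c b) (h3 : ltJ d c) : False := by
  -- a >_J b >_J c >_J d
  have hx : ¬ isMinL c := by
    intro hc
    have hd : isMinL d := min_of_leJ h3.1 hc
    exact h3.2 (min_leJ_min hd hc)
  have hy : ¬ isMinL b := fun hb => hx (min_of_leJ h2.1 hb)
  obtain ⟨t, E1, E2⟩ := descend hH h2 hx
  obtain ⟨r, F1, F2⟩ := descend hH h1 hy
  have hnbt : ¬ isMinL (b * t) := fun h => hx (min_of_eqvL h E1)
  have hnt : ¬ isMinL t := fun h => hnbt (min_of_eqvL h E2)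
  have hnar : ¬ isMinL (a * r) := fun h => hy (min_of_eqvL h F1)
  have hnr : ¬ isMinL r := fun h => hnar (min_of_eqvL h F2)
  obtain ⟨yh, hyt, hyy⟩ := hat hH E2 hnt
  obtain ⟨zh, hzr, hzz⟩ := hat hH F2 hnr
  have hbr : eqvL b r := eqvL_trans F1 F2
  have hrt : ¬ isMinL (r * t) := by
    intro h
    rcases hbr.1 with he | ⟨u, hu⟩
    · rw [← he] at h
      exact hnbt h
    · have h2' : isMinL (u * (r * t)) := isMinL_mul_left u h
      rw [← mul_assoc, ← hu] at h2'
      exact hnbt h2'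
  have hry : ¬ isMinL (r * yh) := by
    intro h
    have h2' : isMinL ((r * yh) * t) := isMinL_mul_right t h
    rw [mul_assoc, hyt] at h2'
    exact hrt h2'
  have hyr : leL yh r := leL_trans hyy.1 hbr.1
  obtain ⟨g, hg, hgz⟩ : ∃ g, yh = g * r ∧ eqvL g zh := by
    rcases hyr with he | ⟨γ, hγ⟩
    · exact ⟨zh, by rw [he, hzr], eqvL_refl zh⟩
    · refine ⟨γ * zh, ?_, Or.inr ⟨γ, rfl⟩, ?_⟩
      · rw [mul_assoc, hzr]; exact hγ
      · by_contra hc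
        have hmin : isMinL (γ * zh) := isMinL_of_ltL hH ⟨Or.inr ⟨γ, rfl⟩, hc⟩
        have h2' : isMinL ((γ * zh) * r) := isMinL_mul_right r hmin
        rw [mul_assoc, hzr, ← hγ] at h2'
        exact hy (min_of_eqvL h2' (eqvL_symm hyy))
  have hrg : ¬ isMinL (r * g) := by
    intro h
    have h2' : isMinL ((r * g) * r) := isMinL_mul_right r h
    rw [mul_assoc, ← hg] at h2'
    exact hry h2'
  have h14 : leL g (r * g) := by
    by_contra hc
    exact hrg (isMinL_of_ltL hH ⟨Or.inr ⟨r, rfl⟩, hc⟩)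
  have hgr : leJ g r := by
    rcases h14 with he | ⟨e, he⟩
    · exact Or.inr (Or.inr (Or.inl ⟨g, he⟩))
    · exact Or.inr (Or.inr (Or.inr ⟨e, g, he.trans (mul_assoc e r g).symm⟩))
  have hag : leL a g := leL_trans hzz.2 hgz.2
  have hrb : leJ r b := leL_leJ hbr.2
  exact h1.2 (leJ_trans (leJ_trans (leL_leJ hag) hgr) hrb)

private lemma exists_ltJ (hH : ∀ x y z : S, ltL x y → ltL y z → False)
    {x y : S} (hxy : ltL x y) : ∃ m, ltJ m y := by
  by_cases hx : isMinL x
  · refine ⟨x, leL_leJ hxy.1, ?_⟩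
    intro hJ
    have hmy : isMinL y := min_of_leJ hJ hx
    exact hxy.2 (hmy x hxy.1)
  · simp only [isMinL] at hx
    push_neg at hx
    obtain ⟨w, hw1, hw2⟩ := hx
    have hmw : isMinL w := isMinL_of_ltL hH ⟨hw1, hw2⟩
    refine ⟨w, leL_leJ (leL_trans hw1 hxy.1), ?_⟩
    intro hJ
    have hmy : isMinL y := min_of_leJ hJ hmw
    exact hxy.2 (hmy x hxy.1)

end Aux



section Heights

private lemma le_height {T : Type u} {lt : T → T → Prop} {m : ℕ}
    (h : m ∈ chainLengths lt) : (m : ℕ∞) ≤ heightOf lt :=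
  le_iSup₂ (f := fun (k : ℕ) (_ : k ∈ chainLengths lt) => (k : ℕ∞)) m h

private lemma height_le {T : Type u} {lt : T → T → Prop} {n : ℕ}
    (h : ∀ m ∈ chainLengths lt, m ≤ n) : heightOf lt ≤ (n : ℕ∞) :=
  iSup₂_le fun m hm => Nat.cast_le.mpr (h m hm)

private lemma two_mem {T : Type u} {lt : T → T → Prop} {a b : T} (h : lt a b) :
    2 ∈ chainLengths lt := by
  refine ⟨fun i => if (i : ℕ) = 0 then b else a, ?_⟩
  intro i j hij
  have h1 : (i : ℕ) < (j : ℕ) := hij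
  have h2 : (j : ℕ) < 2 := j.isLt
  have hi : (i : ℕ) = 0 := by omega
  have hj : (j : ℕ) = 1 := by omega
  simpa [hi, hj] using h

end Heights

section Op

variable {S : Type u} [Semigroup S]

private lemma leR_op {a b : S} :
    leR a b ↔ leL (MulOpposite.op a) (MulOpposite.op b) := by
  constructor
  · rintro (rfl | ⟨s, rfl⟩)
    · exact Or.inl rfl
    · exact Or.inr ⟨MulOpposite.op s, MulOpposite.op_mul b s⟩
  · rintro (h | ⟨s, hs⟩)
    · exact Or.inl (MulOpposite.op_injective h)
    · refine Or.inr ⟨s.unop, MulOpposite.op_injective ?_⟩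
      rw [hs, MulOpposite.op_mul, MulOpposite.op_unop]

private lemma ltR_op {a b : S} :
    ltR a b ↔ ltL (MulOpposite.op a) (MulOpposite.op b) :=
  and_congr leR_op (not_congr leR_op)

private lemma leJ_op {a b : S} :
    leJ a b ↔ leJ (MulOpposite.op a) (MulOpposite.op b) := by
  constructor
  · rintro (rfl | ⟨s, rfl⟩ | ⟨t, rfl⟩ | ⟨s, t, rfl⟩)
    · exact Or.inl rfl
    · exact Or.inr (Or.inr (Or.inl ⟨MulOpposite.op s, MulOpposite.op_mul s b⟩))
    · exact Or.inr (Or.inl ⟨MulOpposite.op t, MulOpposite.op_mul b t⟩)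
    · exact Or.inr (Or.inr (Or.inr ⟨MulOpposite.op t, MulOpposite.op s,
        by simp [mul_assoc]⟩))
  · rintro (h | ⟨s, hs⟩ | ⟨t, ht⟩ | ⟨s, t, hst⟩)
    · exact Or.inl (MulOpposite.op_injective h)
    · refine Or.inr (Or.inr (Or.inl ⟨s.unop, MulOpposite.op_injective ?_⟩))
      rw [hs, MulOpposite.op_mul, MulOpposite.op_unop]
    · refine Or.inr (Or.inl ⟨t.unop, MulOpposite.op_injective ?_⟩)
      rw [ht, MulOpposite.op_mul, MulOpposite.op_unop]
    · refine Or.inr (Or.inr (Or.inr ⟨t.unop, s.unop, MulOpposite.op_injective ?_⟩))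
      rw [hst]
      simp [mul_assoc]

private lemma ltJ_op {a b : S} :
    ltJ a b ↔ ltJ (MulOpposite.op a) (MulOpposite.op b) :=
  and_congr leJ_op (not_congr leJ_op)

private lemma chainR_op :
    chainLengths (ltR (S := S)) = chainLengths (ltL (S := Sᵐᵒᵖ)) := by
  ext m
  constructor
  · rintro ⟨c, hc⟩
    exact ⟨fun i => MulOpposite.op (c i), fun i j hij => ltR_op.mp (hc i j hij)⟩
  · rintro ⟨c, hc⟩
    refine ⟨fun i => (c i).unop, fun i j hij => ltR_op.mpr ?_⟩
    simpa using hc i j hij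

private lemma chainJ_op :
    chainLengths (ltJ (S := S)) = chainLengths (ltJ (S := Sᵐᵒᵖ)) := by
  ext m
  constructor
  · rintro ⟨c, hc⟩
    exact ⟨fun i => MulOpposite.op (c i), fun i j hij => ltJ_op.mp (hc i j hij)⟩
  · rintro ⟨c, hc⟩
    refine ⟨fun i => (c i).unop, fun i j hij => ltJ_op.mpr ?_⟩
    simpa using hc i j hij

private lemma heightOf_congr {T T' : Type u} {l1 : T → T → Prop} {l2 : T' → T' → Prop}
    (h : chainLengths l1 = chainLengths l2) : heightOf l1 = heightOf l2 := by
  unfold heightOf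
  rw [h]

private lemma HR_op : HR S = HL (Sᵐᵒᵖ) := heightOf_congr chainR_op

private lemma HJ_op : HJ S = HJ (Sᵐᵒᵖ) := heightOf_congr chainJ_op

end Op

private theorem main_L (S : Type u) [Semigroup S] (h : HL S = 2) :
    HJ S = 2 ∨ HJ S = 3 := by
  -- no strict L-chain of length 3
  have hH : ∀ x y z : S, ltL x y → ltL y z → False := by
    intro x y z hxy hyz
    have hxz : ltL x z :=
      ⟨leL_trans hxy.1 hyz.1, fun hc => hyz.2 (leL_trans hc hxy.1)⟩
    have h3 : 3 ∈ chainLengths (ltL (S := S)) := by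
      refine ⟨fun i => if (i : ℕ) = 0 then z else if (i : ℕ) = 1 then y else x, ?_⟩
      intro i j hij
      have h1 : (i : ℕ) < (j : ℕ) := hij
      have h2 : (j : ℕ) < 3 := j.isLt
      have hcase : ((i : ℕ) = 0 ∧ (j : ℕ) = 1) ∨ ((i : ℕ) = 0 ∧ (j : ℕ) = 2) ∨
          ((i : ℕ) = 1 ∧ (j : ℕ) = 2) := by omega
      rcases hcase with ⟨hi, hj⟩ | ⟨hi, hj⟩ | ⟨hi, hj⟩
      · simpa [hi, hj] using hyz
      · simpa [hi, hj] using hxz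
      · simpa [hi, hj] using hxy
    have hle : ((3 : ℕ) : ℕ∞) ≤ HL S := le_height h3
    rw [h] at hle
    norm_num at hle
  -- there is a strict L-pair
  have hpair : ∃ x y : S, ltL x y := by
    by_contra hno
    push_neg at hno
    have hub : HL S ≤ ((1 : ℕ) : ℕ∞) := by
      refine height_le ?_
      intro m hm
      by_contra hm1
      push_neg at hm1
      obtain ⟨c, hc⟩ := hm
      exact hno (c ⟨1, by omega⟩) (c ⟨0, by omega⟩)
        (hc ⟨0, by omega⟩ ⟨1, by omega⟩ (Fin.mk_lt_mk.mpr (by omega)))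
    rw [h] at hub
    norm_num at hub
  obtain ⟨x0, y0, hxy0⟩ := hpair
  obtain ⟨m0, hm0⟩ := exists_ltJ hH hxy0
  have low : ((2 : ℕ) : ℕ∞) ≤ HJ S := le_height (two_mem hm0)
  have up : HJ S ≤ ((3 : ℕ) : ℕ∞) := by
    refine height_le ?_
    intro m hm
    by_contra hm4
    push_neg at hm4
    obtain ⟨c, hc⟩ := hm
    have k0 : (0 : ℕ) < m := by omega
    have k1 : (1 : ℕ) < m := by omega
    have k2 : (2 : ℕ) < m := by omega
    have k3 : (3 : ℕ) < m := by omega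
    exact no_four_chain hH
      (hc ⟨0, k0⟩ ⟨1, k1⟩ (Fin.mk_lt_mk.mpr (by omega)))
      (hc ⟨1, k1⟩ ⟨2, k2⟩ (Fin.mk_lt_mk.mpr (by omega)))
      (hc ⟨2, k2⟩ ⟨3, k3⟩ (Fin.mk_lt_mk.mpr (by omega)))
  have hne : HJ S ≠ ⊤ := by
    intro htop
    rw [htop] at up
    norm_num at up
  obtain ⟨n, hn⟩ := WithTop.ne_top_iff_exists.mp hne
  rw [← hn] at low up
  have hn2 : 2 ≤ n := Nat.cast_le.mp low
  have hn3 : n ≤ 3 := Nat.cast_le.mp up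
  have : n = 2 ∨ n = 3 := by omega
  rcases this with rfl | rfl
  · left; rw [← hn]; norm_num; rfl
  · right; rw [← hn]; norm_num; rfl


/-- If `H_L(S) = 2` or `H_R(S) = 2`, then `H_J(S) ∈ {2, 3}`. -/
theorem J_height_two_or_three (S : Type u) [Semigroup S]
    (h : HL S = 2 ∨ HR S = 2) :
    HJ S = 2 ∨ HJ S = 3 := by
  rcases h with hL | hR
  · exact main_L S hL
  · rw [HR_op] at hR
    have := main_L (Sᵐᵒᵖ) hR
    rwa [← HJ_op] at this

end GreenHeights
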